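/- In ℝ², the function F(θ) = (a₁₁ cos²θ + 2 a₂₁ cos θ sin θ + a₂₂ sin²θ)^{1/2} arising from η(v) = sqrt(vᵀ A v) with symmetric matrix A = [[a₁₁, a₂₁],[a₂₁, a₂₂]] satisfies F(θ) + F''(θ) = det(A) / F(θ)³ at every θ where F(θ) > 0. -/

import Mathlib

open Real

noncomputable def Qf (a11 a21 a22 : ℝ) (x : ℝ) : ℝ :=
  a11 * Real.cos x ^ 2 + 2 * a21 * Real.cos x * Real.sin x + a22 * Real.sin x ^ 2

noncomputable def Qf1 (a11 a21 a22 : ℝ) (x : ℝ) : ℝ :=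
  -2 * a11 * Real.cos x * Real.sin x + 2 * a21 * (Real.cos x ^ 2 - Real.sin x ^ 2)
    + 2 * a22 * Real.sin x * Real.cos x

noncomputable def Qf2 (a11 a21 a22 : ℝ) (x : ℝ) : ℝ :=
  -2 * a11 * (Real.cos x ^ 2 - Real.sin x ^ 2) - 8 * a21 * Real.cos x * Real.sin x
    + 2 * a22 * (Real.cos x ^ 2 - Real.sin x ^ 2)

lemma hasDerivAt_Qf (a11 a21 a22 x : ℝ) :
    HasDerivAt (Qf a11 a21 a22) (Qf1 a11 a21 a22 x) x := by
  have h := ((((Real.hasDerivAt_cos x).pow 2).const_mul a11).add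
    ((((Real.hasDerivAt_cos x).mul (Real.hasDerivAt_sin x)).const_mul (2*a21)).add
      (((Real.hasDerivAt_sin x).pow 2).const_mul a22)))
  convert h using 1
  · rfl
  · rfl
  · ext y; simp [Qf]; ring
  · simp [Qf1]; ring

lemma hasDerivAt_Qf1 (a11 a21 a22 x : ℝ) :
    HasDerivAt (Qf1 a11 a21 a22) (Qf2 a11 a21 a22 x) x := by
  have h := (((((Real.hasDerivAt_cos x).mul (Real.hasDerivAt_sin x)).const_mul (-2*a11)).add
    ((((Real.hasDerivAt_cos x).pow 2).sub ((Real.hasDerivAt_sin x).pow 2)).const_mul (2*a21))).add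
      ((((Real.hasDerivAt_sin x).mul (Real.hasDerivAt_cos x)).const_mul (2*a22))))
  convert h using 1
  · rfl
  · rfl
  · ext y; simp [Qf1]; ring
  · simp [Qf2]; ring

lemma key_identity (a11 a21 a22 x : ℝ) :
    4 * (Qf a11 a21 a22 x) ^ 2 + 2 * (Qf a11 a21 a22 x) * (Qf2 a11 a21 a22 x)
      - (Qf1 a11 a21 a22 x) ^ 2 = 4 * (a11 * a22 - a21 ^ 2) := by
  have h := sin_sq_add_cos_sq x
  simp only [Qf, Qf1, Qf2]
  linear_combination (4 * (a11 * a22 - a21 ^ 2) * (1 + Real.cos x ^ 2 + Real.sin x ^ 2)) * h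

theorem polar_convexity_quadratic_form (a11 a21 a22 : ℝ)
    (F : ℝ → ℝ)
    (hF : F = fun θ => Real.sqrt
      (a11 * cos θ ^ 2 + 2 * a21 * cos θ * sin θ + a22 * sin θ ^ 2)) :
    ∀ θ : ℝ, 0 < F θ →
      F θ + deriv (deriv F) θ = (a11 * a22 - a21 ^ 2) / (F θ) ^ 3 := by
  intro θ hθ
  have hFQ : F = fun x => Real.sqrt (Qf a11 a21 a22 x) := by
    rw [hF]; ext x; simp [Qf]
  have hQpos : 0 < Qf a11 a21 a22 θ := by
    by_contra h
    push_neg at h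
    rw [hFQ] at hθ
    simp only at hθ
    rw [Real.sqrt_eq_zero_of_nonpos h] at hθ
    exact lt_irrefl _ hθ
  -- continuity of Qf
  have hQcont : Continuous (Qf a11 a21 a22) := by
    unfold Qf; continuity
  have hnbhd : ∀ᶠ x in nhds θ, 0 < Qf a11 a21 a22 x :=
    (hQcont.continuousAt (x := θ)).eventually (eventually_gt_nhds hQpos)
  -- derivative of F on the set where Q > 0
  have hDF : ∀ x, 0 < Qf a11 a21 a22 x →
      HasDerivAt F (Qf1 a11 a21 a22 x / (2 * Real.sqrt (Qf a11 a21 a22 x))) x := by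
    intro x hx
    rw [hFQ]
    exact (hasDerivAt_Qf a11 a21 a22 x).sqrt hx.ne'
  have hEq : deriv F =ᶠ[nhds θ]
      (fun x => Qf1 a11 a21 a22 x / (2 * Real.sqrt (Qf a11 a21 a22 x))) := by
    filter_upwards [hnbhd] with x hx
    exact (hDF x hx).deriv
  set s := Real.sqrt (Qf a11 a21 a22 θ) with hs
  have hspos : 0 < s := Real.sqrt_pos.mpr hQpos
  have hssq : s ^ 2 = Qf a11 a21 a22 θ := Real.sq_sqrt hQpos.le
  -- derivative of deriv F at θ
  have hden : HasDerivAt (fun x => 2 * Real.sqrt (Qf a11 a21 a22 x))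
      (2 * (Qf1 a11 a21 a22 θ / (2 * s))) θ :=
    ((hasDerivAt_Qf a11 a21 a22 θ).sqrt hQpos.ne').const_mul 2
  have hD2 : HasDerivAt (fun x => Qf1 a11 a21 a22 x / (2 * Real.sqrt (Qf a11 a21 a22 x)))
      ((Qf2 a11 a21 a22 θ * (2 * s) - Qf1 a11 a21 a22 θ * (2 * (Qf1 a11 a21 a22 θ / (2 * s))))
        / (2 * s) ^ 2) θ :=
    (hasDerivAt_Qf1 a11 a21 a22 θ).div hden (by positivity)
  have h2 : deriv (deriv F) θ =
      (Qf2 a11 a21 a22 θ * (2 * s) - Qf1 a11 a21 a22 θ * (2 * (Qf1 a11 a21 a22 θ / (2 * s))))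
        / (2 * s) ^ 2 := by
    rw [hEq.deriv_eq]
    exact hD2.deriv
  have hFθ : F θ = s := by rw [hFQ]
  rw [h2, hFθ]
  have hkey := key_identity a11 a21 a22 θ
  rw [← hssq] at hkey
  have hsne : s ≠ 0 := hspos.ne'
  field_simp
  nlinarith [hkey, sq_nonneg s, hspos]
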